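/- Let H be a Hilbert space, X a Banach space, and a < b real numbers. If φ : (a,b) → γ(H,X) is continuously differentiable with ∫_a^b (s−a)^{1/2} ‖φ'(s)‖_{γ(H,X)} ds < ∞ and φ extends continuously to b, then φ defines an element of γ((a,b); H, X) and ‖φ‖_{γ(a,b;H,X)} ≤ (b−a)^{1/2} ‖φ(b−)‖_{γ(H,X)} + ∫_a^b (s−a)^{1/2} ‖φ'(s)‖_{γ(H,X)} ds. In the case when X is a Hilbert space this reads: ‖φ‖_{L²((a,b);HS(H,X))} ≤ (b−a)^{1/2}‖φ(b−)‖_{HS} + ∫_a^b (s−a)^{1/2}‖φ'(s)‖_{HS} ds, where HS denotes Hilbert–Schmidt operators. -/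

import Mathlib

open MeasureTheory Set Filter

open scoped ENNReal

lemma ofReal_norm_eq_coe_nnnorm {F : Type*} [NormedAddCommGroup F] (x : F) :
    ENNReal.ofReal ‖x‖ = (‖x‖₊ : ℝ≥0∞) := by
  rw [ofReal_norm_eq_enorm]; rfl

lemma min_sub_le_sqrt_mul (a : ℝ) {t u : ℝ} (ht : a < t) (hu : a < u) :
    min t u - a ≤ (t - a) ^ (1/2 : ℝ) * (u - a) ^ (1/2 : ℝ) := by
  wlog h : t ≤ u generalizing t u
  · rw [min_comm, mul_comm]; exact this hu ht (le_of_not_ge h)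
  rw [min_eq_left h]
  calc t - a = (t - a) ^ (1/2 : ℝ) * (t - a) ^ (1/2 : ℝ) := by
        rw [← Real.rpow_add (by linarith)]; norm_num
    _ ≤ (t - a) ^ (1/2 : ℝ) * (u - a) ^ (1/2 : ℝ) := by
        have h1 : (0:ℝ) ≤ (t - a) ^ (1/2 : ℝ) := Real.rpow_nonneg (by linarith) _
        exact mul_le_mul_of_nonneg_left (Real.rpow_le_rpow (by linarith) (by linarith) (by norm_num)) h1

lemma core_minkowski {a b : ℝ} (hab : a < b) (G : ℝ → ℝ≥0∞) (hG : Measurable G)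
    (hGsupp : ∀ t, t ∉ Ioo a b → G t = 0) :
    (∫⁻ s in Ioo a b, (∫⁻ t in Ioi s, G t) ^ 2) ^ (1/2 : ℝ)
      ≤ ∫⁻ t, ENNReal.ofReal ((t - a) ^ (1/2 : ℝ)) * G t := by
  set W : ℝ → ℝ≥0∞ := fun t => ENNReal.ofReal ((t - a) ^ (1/2 : ℝ)) with hW
  set J : ℝ≥0∞ := ∫⁻ t, W t * G t with hJ
  set k : ℝ → ℝ → ℝ≥0∞ := fun s t => (Ioi s).indicator G t with hk
  set H : ℝ → ℝ≥0∞ := fun s => ∫⁻ t in Ioi s, G t with hH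
  have hHk : ∀ s, H s = ∫⁻ t, k s t := fun s =>
    (lintegral_indicator measurableSet_Ioi _).symm
  have hHmeas : Measurable H := by
    have : Antitone H := fun s s' hss' =>
      lintegral_mono' (Measure.restrict_mono (Ioi_subset_Ioi hss') le_rfl) le_rfl
    exact this.measurable
  have hkmeas : Measurable (Function.uncurry k) := by
    have : Function.uncurry k = fun p : ℝ × ℝ =>
        Set.indicator {q : ℝ × ℝ | q.1 < q.2} (fun q => G q.2) p := by
      ext p
      simp only [Function.uncurry, hk, indicator, mem_Ioi, mem_setOf_eq]
    rw [this]
    exact (hG.comp measurable_snd).indicator (measurableSet_lt measurable_fst measurable_snd)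
  have hk1 : ∀ t, Measurable (fun s => k s t) := fun t =>
    hkmeas.comp (measurable_id.prodMk measurable_const)
  have hk2 : ∀ s, Measurable (k s) := fun s =>
    hkmeas.comp (measurable_const.prodMk measurable_id)
  -- expand square and swap
  have step1 : ∫⁻ s in Ioo a b, (H s) ^ 2
      = ∫⁻ t, ∫⁻ u, ∫⁻ s in Ioo a b, k s t * k s u := by
    have e1 : ∀ s, (H s) ^ 2 = ∫⁻ t, k s t * H s := by
      intro s
      rw [pow_two, hHk s, ← lintegral_mul_const'' _ (hk2 s).aemeasurable]
    calc ∫⁻ s in Ioo a b, (H s) ^ 2 = ∫⁻ s in Ioo a b, ∫⁻ t, k s t * H s := by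
          simp_rw [e1]
      _ = ∫⁻ t, ∫⁻ s in Ioo a b, k s t * H s := by
          apply lintegral_lintegral_swap
          exact (hkmeas.mul (hHmeas.comp measurable_fst)).aemeasurable
      _ = ∫⁻ t, ∫⁻ u, ∫⁻ s in Ioo a b, k s t * k s u := by
          refine lintegral_congr fun t => ?_
          calc ∫⁻ s in Ioo a b, k s t * H s
              = ∫⁻ s in Ioo a b, ∫⁻ u, k s t * k s u := by
                refine lintegral_congr fun s => ?_
                rw [hHk s, ← lintegral_const_mul'' _ (hk2 s).aemeasurable]
            _ = ∫⁻ u, ∫⁻ s in Ioo a b, k s t * k s u := by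
                apply lintegral_lintegral_swap
                exact ((hk1 t).comp measurable_fst).aemeasurable.mul hkmeas.aemeasurable
  -- inner bound
  have step2 : ∀ t u, ∫⁻ s in Ioo a b, k s t * k s u ≤ (W t * G t) * (W u * G u) := by
    intro t u
    by_cases ht : t ∈ Ioo a b
    · by_cases hu : u ∈ Ioo a b
      · have hm : a < min t u := lt_min ht.1 hu.1
        have hmb : min t u ≤ b := le_trans (min_le_left _ _) ht.2.le
        have key : ∀ s, k s t * k s u = (Iio (min t u)).indicator (fun _ => G t * G u) s := by
          intro s
          simp only [hk, indicator, mem_Ioi, mem_Iio, lt_min_iff]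
          by_cases h1 : s < t <;> by_cases h2 : s < u <;> simp [h1, h2]
        calc ∫⁻ s in Ioo a b, k s t * k s u
            = ∫⁻ s in Ioo a b, (Iio (min t u)).indicator (fun _ => G t * G u) s := by
              simp_rw [key]
          _ = (G t * G u) * volume (Iio (min t u) ∩ Ioo a b) := by
              rw [lintegral_indicator measurableSet_Iio, setLIntegral_const,
                Measure.restrict_apply measurableSet_Iio]
          _ = (G t * G u) * ENNReal.ofReal (min t u - a) := by
              congr 1
              have : Iio (min t u) ∩ Ioo a b = Ioo a (min t u) := by
                ext x
                simp only [mem_inter_iff, mem_Iio, mem_Ioo]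
                constructor
                · rintro ⟨h1, h2, h3⟩; exact ⟨h2, h1⟩
                · rintro ⟨h1, h2⟩; exact ⟨h2, h1, lt_of_lt_of_le h2 hmb⟩
              rw [this, Real.volume_Ioo]
          _ ≤ (G t * G u) * (W t * W u) := by
              gcongr
              rw [hW, ← ENNReal.ofReal_mul (Real.rpow_nonneg (by linarith [ht.1]) _)]
              exact ENNReal.ofReal_le_ofReal (min_sub_le_sqrt_mul a ht.1 hu.1)
          _ = (W t * G t) * (W u * G u) := by ring
      · simp [hk, Set.indicator_apply, hGsupp u hu]
    · simp [hk, Set.indicator_apply, hGsupp t ht]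
  calc (∫⁻ s in Ioo a b, (H s) ^ 2) ^ (1/2 : ℝ)
      ≤ (J ^ 2) ^ (1/2 : ℝ) := by
        apply ENNReal.rpow_le_rpow _ (by norm_num)
        rw [step1]
        calc ∫⁻ t, ∫⁻ u, ∫⁻ s in Ioo a b, k s t * k s u
            ≤ ∫⁻ t, ∫⁻ u, (W t * G t) * (W u * G u) := by
              refine lintegral_mono fun t => lintegral_mono fun u => step2 t u
          _ = J ^ 2 := by
              rw [pow_two, hJ]
              have hWG : AEMeasurable (fun t => W t * G t) volume :=
                ((ENNReal.measurable_ofReal.comp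
                  ((measurable_id.sub measurable_const).pow_const _)).mul hG).aemeasurable
              calc ∫⁻ t, ∫⁻ u, (W t * G t) * (W u * G u)
                  = ∫⁻ t, (W t * G t) * ∫⁻ u, (W u * G u) := by
                    refine lintegral_congr fun t => lintegral_const_mul'' _ hWG
                _ = (∫⁻ t, W t * G t) * ∫⁻ u, (W u * G u) :=
                    lintegral_mul_const'' _ hWG
    _ = J := by
        rw [← ENNReal.rpow_natCast J 2, ← ENNReal.rpow_mul]
        norm_num

lemma phi_rep {E : Type*} [NormedAddCommGroup E] [NormedSpace ℝ E] [CompleteSpace E]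
    (a b : ℝ) (φ φ' : ℝ → E) (L : E)
    (hderiv : ∀ s ∈ Ioo a b, HasDerivAt φ (φ' s) s)
    (hcont : ContinuousOn φ' (Ioo a b))
    (hlim : Tendsto φ (nhdsWithin b (Iio b)) (nhds L))
    {s : ℝ} (hs : s ∈ Ioo a b) (hφi : IntegrableOn φ' (Ioo s b)) :
    φ s = L - ∫ t in Ioo s b, φ' t := by
  have hsb : s < b := hs.2
  have key : ∀ r ∈ Ioo s b, φ r = φ s + ∫ t in s..r, φ' t := by
    intro r hr
    have hsr : s ≤ r := hr.1.le
    have hsub : uIcc s r ⊆ Ioo a b := by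
      rw [uIcc_of_le hsr]
      exact fun x hx => ⟨lt_of_lt_of_le hs.1 hx.1, lt_of_le_of_lt hx.2 hr.2⟩
    have h1 : ∫ t in s..r, φ' t = φ r - φ s :=
      intervalIntegral.integral_eq_sub_of_hasDerivAt
        (fun x hx => hderiv x (hsub hx))
        ((hcont.mono hsub).intervalIntegrable)
    rw [h1]; abel
  have hne : (nhdsWithin b (Ioo s b)).NeBot := right_nhdsWithin_Ioo_neBot hsb
  have t1 : Tendsto φ (nhdsWithin b (Ioo s b)) (nhds L) :=
    hlim.mono_left (nhdsWithin_mono b Ioo_subset_Iio_self)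
  have hIcc : IntegrableOn φ' (Icc s b) := by
    rw [integrableOn_Icc_iff_integrableOn_Ioo]; exact hφi
  have hconts : ContinuousOn (fun r => ∫ t in s..r, φ' t) (uIcc s b) := by
    apply intervalIntegral.continuousOn_primitive_interval
    rwa [uIcc_of_le hsb.le]
  have t2 : Tendsto (fun r => φ s + ∫ t in s..r, φ' t) (nhdsWithin b (Ioo s b))
      (nhds (φ s + ∫ t in s..b, φ' t)) := by
    apply Tendsto.const_add
    have hb : b ∈ uIcc s b := by rw [uIcc_of_le hsb.le]; exact right_mem_Icc.mpr hsb.le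
    have hsub2 : Ioo s b ⊆ uIcc s b := by
      rw [uIcc_of_le hsb.le]; exact Ioo_subset_Icc_self
    exact (hconts b hb).tendsto.mono_left (nhdsWithin_mono b hsub2)
  have t1' : Tendsto (fun r => φ s + ∫ t in s..r, φ' t) (nhdsWithin b (Ioo s b)) (nhds L) := by
    apply t1.congr'
    filter_upwards [self_mem_nhdsWithin] with r hr
    exact key r hr
  have hEq : L = φ s + ∫ t in s..b, φ' t := tendsto_nhds_unique t1' t2
  rw [hEq, intervalIntegral.integral_of_le hsb.le, integral_Ioc_eq_integral_Ioo]
  abel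

/-- Proposition 2.4 in the Hilbert-space specialization, where `γ(H,X)` is the space of
Hilbert–Schmidt operators (a Hilbert space `E`) and `γ(a,b;H,X) = L²((a,b);HS(H,X))`:
if `φ : (a,b) → E` is continuously differentiable with
`∫_a^b (s−a)^{1/2} ‖φ'(s)‖ ds < ∞` and `φ` extends continuously to `b` with limit
`φ(b−) = L`, then `φ ∈ L²((a,b);E)` and
`‖φ‖_{L²((a,b);E)} ≤ (b−a)^{1/2} ‖φ(b−)‖ + ∫_a^b (s−a)^{1/2} ‖φ'(s)‖ ds`. -/
theorem gamma_norm_bound_via_derivative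
    {E : Type*} [NormedAddCommGroup E] [InnerProductSpace ℝ E] [CompleteSpace E]
    (a b : ℝ) (hab : a < b) (φ φ' : ℝ → E) (L : E)
    (hderiv : ∀ s ∈ Ioo a b, HasDerivAt φ (φ' s) s)
    (hcont : ContinuousOn φ' (Ioo a b))
    (hlim : Tendsto φ (nhdsWithin b (Iio b)) (nhds L))
    (hint : IntegrableOn (fun s => (s - a) ^ (1/2 : ℝ) * ‖φ' s‖) (Ioo a b)) :
    MemLp φ 2 (volume.restrict (Ioo a b)) ∧
      (∫ s in Ioo a b, ‖φ s‖ ^ 2) ^ (1/2 : ℝ)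
        ≤ (b - a) ^ (1/2 : ℝ) * ‖L‖
          + ∫ s in Ioo a b, (s - a) ^ (1/2 : ℝ) * ‖φ' s‖ := by
  have hab' : (0:ℝ) ≤ b - a := by linarith
  set μ := volume.restrict (Ioo a b) with hμ
  -- integrability of φ' on right tails
  have htail : ∀ s ∈ Ioo a b, IntegrableOn φ' (Ioo s b) := by
    intro s hs
    have hc : 0 < (s - a) ^ (1/2 : ℝ) := Real.rpow_pos_of_pos (by linarith [hs.1]) _
    have hsub : Ioo s b ⊆ Ioo a b := Ioo_subset_Ioo_left hs.1.le
    refine Integrable.mono' ((hint.mono_set hsub).const_mul (((s - a) ^ (1/2 : ℝ))⁻¹))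
      ((hcont.mono hsub).aestronglyMeasurable measurableSet_Ioo) ?_
    filter_upwards [ae_restrict_mem measurableSet_Ioo] with t ht
    rw [le_inv_mul_iff₀ hc]
    have h1 : (s - a) ^ (1/2 : ℝ) ≤ (t - a) ^ (1/2 : ℝ) :=
      Real.rpow_le_rpow (by linarith [hs.1]) (by linarith [ht.1]) (by norm_num)
    exact mul_le_mul_of_nonneg_right h1 (norm_nonneg _)
  have hrep : ∀ s ∈ Ioo a b, φ s = L - ∫ t in Ioo s b, φ' t :=
    fun s hs => phi_rep a b φ φ' L hderiv hcont hlim hs (htail s hs)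
  -- measurable versions
  have hφ'meas : AEStronglyMeasurable φ' μ := hcont.aestronglyMeasurable measurableSet_Ioo
  have hG1 : AEMeasurable (fun t => (‖φ' t‖₊ : ℝ≥0∞)) μ := hφ'meas.enorm
  set G : ℝ → ℝ≥0∞ := (Ioo a b).indicator (hG1.mk _) with hGdef
  have hGmeas : Measurable G := hG1.measurable_mk.indicator measurableSet_Ioo
  have hGsupp : ∀ t, t ∉ Ioo a b → G t = 0 := fun t ht => indicator_of_notMem ht _
  set H : ℝ → ℝ≥0∞ := fun s => ∫⁻ t in Ioi s, G t with hHdef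
  have hHmeas : Measurable H := by
    have h : Antitone H := fun s s' h =>
      lintegral_mono' (Measure.restrict_mono (Ioi_subset_Ioi h) le_rfl) le_rfl
    exact h.measurable
  -- identify H on Ioo a b
  have hHs : ∀ s ∈ Ioo a b, H s = ∫⁻ t in Ioo s b, (‖φ' t‖₊ : ℝ≥0∞) := by
    intro s hs
    have h1 : Ioo a b ∩ Ioi s = Ioo s b := by
      ext x
      simp only [mem_inter_iff, mem_Ioo, mem_Ioi]
      exact ⟨fun ⟨⟨_, h2⟩, h3⟩ => ⟨h3, h2⟩, fun ⟨h1, h2⟩ => ⟨⟨hs.1.trans h1, h2⟩, h1⟩⟩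
    have h2 : H s = ∫⁻ t in Ioo s b, hG1.mk _ t := by
      rw [hHdef]
      simp only [hGdef]
      rw [lintegral_indicator measurableSet_Ioo,
        Measure.restrict_restrict measurableSet_Ioo, h1]
    rw [h2]
    refine lintegral_congr_ae ?_
    have h3 : (fun t => (‖φ' t‖₊ : ℝ≥0∞)) =ᵐ[volume.restrict (Ioo s b)] hG1.mk _ :=
      ae_restrict_of_ae_restrict_of_subset (Ioo_subset_Ioo_left hs.1.le) hG1.ae_eq_mk
    exact h3.symm
  -- pointwise bound
  have hpt : ∀ s ∈ Ioo a b, (‖φ s‖₊ : ℝ≥0∞) ≤ (‖L‖₊ : ℝ≥0∞) + H s := by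
    intro s hs
    have hInt : IntegrableOn (fun t => ‖φ' t‖) (Ioo s b) := (htail s hs).norm
    have hreal : ‖φ s‖ ≤ ‖L‖ + ∫ t in Ioo s b, ‖φ' t‖ := by
      rw [hrep s hs]
      refine (norm_sub_le _ _).trans ?_
      gcongr
      exact norm_integral_le_integral_norm _
    have hofReal : ENNReal.ofReal (∫ t in Ioo s b, ‖φ' t‖) = H s := by
      rw [ofReal_integral_eq_lintegral_ofReal hInt
        (Eventually.of_forall fun t => norm_nonneg _), hHs s hs]
      simp_rw [ofReal_norm_eq_coe_nnnorm]
    calc (‖φ s‖₊ : ℝ≥0∞) = ENNReal.ofReal ‖φ s‖ := (ofReal_norm_eq_coe_nnnorm _).symm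
      _ ≤ ENNReal.ofReal (‖L‖ + ∫ t in Ioo s b, ‖φ' t‖) := ENNReal.ofReal_le_ofReal hreal
      _ ≤ ENNReal.ofReal ‖L‖ + ENNReal.ofReal (∫ t in Ioo s b, ‖φ' t‖) :=
          ENNReal.ofReal_add_le
      _ = _ := by rw [hofReal, ofReal_norm_eq_coe_nnnorm]
  -- the weighted integral
  set I : ℝ := ∫ s in Ioo a b, (s - a) ^ (1/2 : ℝ) * ‖φ' s‖ with hIdef
  have hI0 : 0 ≤ I := setIntegral_nonneg measurableSet_Ioo fun t ht =>
    mul_nonneg (Real.rpow_nonneg (by linarith [ht.1]) _) (norm_nonneg _)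
  have hJI : ∫⁻ t, ENNReal.ofReal ((t - a) ^ (1/2 : ℝ)) * G t = ENNReal.ofReal I := by
    have e1 : ∀ t, ENNReal.ofReal ((t - a) ^ (1/2 : ℝ)) * G t
        = (Ioo a b).indicator (fun t => ENNReal.ofReal ((t - a) ^ (1/2 : ℝ)) * hG1.mk _ t) t := by
      intro t
      by_cases ht : t ∈ Ioo a b
      · simp only [hGdef, indicator_of_mem ht]
      · simp only [hGdef, indicator_of_notMem ht, mul_zero]
    simp_rw [e1]
    rw [lintegral_indicator measurableSet_Ioo]
    rw [ofReal_integral_eq_lintegral_ofReal hint ?nn]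
    case nn =>
      filter_upwards [ae_restrict_mem measurableSet_Ioo] with t ht
      exact mul_nonneg (Real.rpow_nonneg (by linarith [ht.1]) _) (norm_nonneg _)
    refine lintegral_congr_ae ?_
    filter_upwards [hG1.ae_eq_mk, ae_restrict_mem measurableSet_Ioo] with t h1 h2
    rw [← h1, ← ofReal_norm_eq_coe_nnnorm,
      ← ENNReal.ofReal_mul (Real.rpow_nonneg (by linarith [h2.1]) _)]
  -- continuity / measurability of φ
  have hφc : ContinuousOn φ (Ioo a b) := fun s hs =>
    (hderiv s hs).continuousAt.continuousWithinAt
  have hφmeas : AEStronglyMeasurable φ μ :=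
    hφc.aestronglyMeasurable measurableSet_Ioo
  set T : ℝ≥0∞ := ∫⁻ s in Ioo a b, (‖φ s‖₊ : ℝ≥0∞) ^ (2:ℝ) with hTdef
  set R : ℝ≥0∞ := (‖L‖₊ : ℝ≥0∞) * (ENNReal.ofReal (b - a)) ^ (1/2 : ℝ)
      + ENNReal.ofReal I with hRdef
  have hRne : R ≠ ⊤ := by
    rw [hRdef]
    exact ENNReal.add_ne_top.mpr
      ⟨ENNReal.mul_ne_top ENNReal.coe_ne_top
        (ENNReal.rpow_ne_top_of_nonneg (by norm_num) ENNReal.ofReal_ne_top),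
      ENNReal.ofReal_ne_top⟩
  have hTle : T ^ (1/2 : ℝ) ≤ R := by
    have mono1 : T ≤ ∫⁻ s in Ioo a b, ((‖L‖₊:ℝ≥0∞) + H s) ^ (2:ℝ) := by
      refine lintegral_mono_ae ?_
      filter_upwards [ae_restrict_mem measurableSet_Ioo] with s hs
      exact ENNReal.rpow_le_rpow (hpt s hs) (by norm_num)
    have mink := ENNReal.lintegral_Lp_add_le (μ := μ)
      (f := fun _ => (‖L‖₊:ℝ≥0∞)) (g := H) aemeasurable_const hHmeas.aemeasurable
      (by norm_num : (1:ℝ) ≤ 2)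
    simp only [Pi.add_apply] at mink
    have c1 : (∫⁻ _ in Ioo a b, (‖L‖₊:ℝ≥0∞) ^ (2:ℝ)) ^ (1/(2:ℝ))
        = (‖L‖₊ : ℝ≥0∞) * (ENNReal.ofReal (b - a)) ^ (1/2 : ℝ) := by
      rw [setLIntegral_const, Real.volume_Ioo,
        ENNReal.mul_rpow_of_nonneg _ _ (by norm_num), ← ENNReal.rpow_mul]
      norm_num
    have c2 : (∫⁻ s in Ioo a b, H s ^ (2:ℝ)) ^ (1/(2:ℝ)) ≤ ENNReal.ofReal I := by
      rw [← hJI]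
      have h2 : ∀ x : ℝ≥0∞, x ^ (2:ℝ) = x ^ (2:ℕ) := fun x => by
        rw [← ENNReal.rpow_natCast]; norm_num
      simp_rw [h2]
      exact core_minkowski hab G hGmeas hGsupp
    calc T ^ (1/2 : ℝ)
        ≤ (∫⁻ s in Ioo a b, ((‖L‖₊:ℝ≥0∞) + H s) ^ (2:ℝ)) ^ (1/(2:ℝ)) :=
          ENNReal.rpow_le_rpow mono1 (by norm_num)
      _ ≤ (∫⁻ _ in Ioo a b, (‖L‖₊:ℝ≥0∞) ^ (2:ℝ)) ^ (1/(2:ℝ))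
          + (∫⁻ s in Ioo a b, H s ^ (2:ℝ)) ^ (1/(2:ℝ)) := mink
      _ ≤ R := by rw [hRdef]; exact add_le_add c1.le c2
  have heLp : eLpNorm φ 2 μ = T ^ (1/2 : ℝ) := by
    rw [eLpNorm_eq_lintegral_rpow_enorm_toReal (by norm_num) (by norm_num), hTdef]
    norm_num
    rfl
  have hmem : MemLp φ 2 μ := ⟨hφmeas, by
    rw [heLp]; exact lt_of_le_of_lt hTle (lt_top_iff_ne_top.mpr hRne)⟩
  refine ⟨hmem, ?_⟩
  have hsqmeas : AEStronglyMeasurable (fun s => ‖φ s‖ ^ 2) μ := by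
    exact (hφmeas.norm.mul hφmeas.norm).congr (Eventually.of_forall fun s => by simp [pow_two])
  have hTreal : ∫ s in Ioo a b, ‖φ s‖ ^ 2 = T.toReal := by
    rw [integral_eq_lintegral_of_nonneg_ae
      (Eventually.of_forall fun s => sq_nonneg _) hsqmeas, hTdef]
    congr 1
    refine lintegral_congr fun s => ?_
    rw [ENNReal.ofReal_pow (norm_nonneg _), ofReal_norm_eq_coe_nnnorm,
      ← ENNReal.rpow_natCast]
    norm_num
  rw [hTreal, ENNReal.toReal_rpow]
  refine (ENNReal.toReal_mono hRne hTle).trans (le_of_eq ?_)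
  rw [hRdef, ENNReal.toReal_add (ENNReal.mul_ne_top ENNReal.coe_ne_top
      (ENNReal.rpow_ne_top_of_nonneg (by norm_num) ENNReal.ofReal_ne_top))
      ENNReal.ofReal_ne_top,
    ENNReal.toReal_mul, ← ENNReal.toReal_rpow, ENNReal.toReal_ofReal hab',
    ENNReal.coe_toReal, coe_nnnorm, ENNReal.toReal_ofReal hI0]
  ring
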